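/- Let p be a prime, n coprime to p, and let S be a subspace of F_p^n × F_p^n closed under simultaneous cyclic shift (i.e., (a,b) ∈ S implies (Na, Nb) ∈ S). Then S is totally isotropic for the symplectic form ⟨(a,b),(c,d)⟩ = a^T d - b^T c if and only if for all (a,b), (c,d) in S, the polynomial identity b(X)c(X^{-1}) - a(X)d(X^{-1}) = 0 holds modulo X^n - 1. -/

import Mathlib

open Polynomial
open Fin.NatCast

/-- The polynomial associated to a vector in `F_p^n`. -/
noncomputable def vecToPoly {p n : ℕ} (a : Fin n → ZMod p) : Polynomial (ZMod p) :=
  ∑ i : Fin n, Polynomial.C (a i) * Polynomial.X ^ (i : ℕ)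

/-- The cyclic right-shift operator on `F_p^n`. -/
def rightShift {p n : ℕ} [NeZero n] (u : Fin n → ZMod p) : Fin n → ZMod p :=
  fun i => u (i - 1)

/-- The symplectic form `⟨(a,b),(c,d)⟩ = aᵀd - bᵀc` on `F_p^n × F_p^n`. -/
def sympForm {p n : ℕ} (u v : (Fin n → ZMod p) × (Fin n → ZMod p)) : ZMod p :=
  (∑ i : Fin n, u.1 i * v.2 i) - (∑ i : Fin n, u.2 i * v.1 i)

lemma dvd_pow_sub_pow_of_mod (p n a b : ℕ) (h : a % n = b % n) :
    ((X:Polynomial (ZMod p))^n - 1) ∣ X^a - X^b := by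
  have key : ∀ c : ℕ, ((X:Polynomial (ZMod p))^n - 1) ∣ X^c - X^(c % n) := by
    intro c
    have hc : (X:Polynomial (ZMod p))^c = X^(c % n) * (X^n)^(c / n) := by
      rw [← pow_mul, ← pow_add]
      exact congrArg (X ^ ·) (Nat.mod_add_div c n).symm
    rw [hc]
    have hd := (sub_dvd_pow_sub_pow ((X:Polynomial (ZMod p))^n) 1 (c/n)).mul_left
      ((X:Polynomial (ZMod p))^(c % n))
    simpa [mul_sub, one_pow] using hd
  have h2 := (key a).sub (key b)
  rw [h] at h2
  simpa using h2

lemma exp_congr {n : ℕ} [NeZero n] (i j : Fin n) :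
    (i.val + j.val * (n-1)) % n = ((i - j : Fin n) : ℕ) % n := by
  rw [← ZMod.natCast_eq_natCast_iff']
  have hj : (j:ℕ) ≤ n := j.isLt.le
  have hn : (1:ℕ) ≤ n := Nat.one_le_iff_ne_zero.2 (NeZero.ne n)
  rw [Fin.sub_def]
  push_cast [Nat.cast_sub hj, Nat.cast_sub hn]
  simp [ZMod.natCast_self]
  ring

lemma rightShift_iter {p n : ℕ} [NeZero n] (u : Fin n → ZMod p) (k : ℕ) :
    rightShift^[k] u = fun i => u (i - (k : Fin n)) := by
  induction k with
  | zero => simp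
  | succ m ih =>
    funext i
    rw [Function.iterate_succ_apply', rightShift, ih]
    show u (i - 1 - (m : Fin n)) = u (i - ((m+1 : ℕ) : Fin n))
    have : i - 1 - (m : Fin n) = i - ((m+1 : ℕ) : Fin n) := by
      push_cast
      abel
    rw [this]

lemma key_dvd (p n : ℕ) [NeZero n] (a b c d : Fin n → ZMod p) :
    ((X:Polynomial (ZMod p))^n - 1) ∣
      (vecToPoly b * (vecToPoly c).comp (X ^ (n-1)) -
        vecToPoly a * (vecToPoly d).comp (X^(n-1))) -
      ∑ k : Fin n, C (∑ i : Fin n, (b i * c (i - k) - a i * d (i - k))) * X ^ (k:ℕ) := by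
  have expand : ∀ (a c : Fin n → ZMod p),
      vecToPoly a * (vecToPoly c).comp ((X:Polynomial (ZMod p))^(n-1)) =
      ∑ i : Fin n, ∑ j : Fin n, C (a i * c j) * X ^ (i.val + j.val * (n-1)) := by
    intro a c
    rw [vecToPoly, vecToPoly, Polynomial.sum_comp, Finset.sum_mul]
    refine Finset.sum_congr rfl fun i _ => ?_
    rw [Finset.mul_sum]
    refine Finset.sum_congr rfl fun j _ => ?_
    simp only [Polynomial.mul_comp, Polynomial.C_comp, Polynomial.pow_comp,
      Polynomial.X_comp, ← pow_mul, pow_add, map_mul]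
    ring
  have gexp : (∑ k : Fin n, C (∑ i : Fin n, (b i * c (i - k) - a i * d (i - k)))
        * (X:Polynomial (ZMod p)) ^ (k:ℕ)) =
      ∑ i : Fin n, ∑ j : Fin n,
        (C (b i * c j) - C (a i * d j)) * X ^ ((i - j : Fin n) : ℕ) := by
    calc (∑ k : Fin n, C (∑ i : Fin n, (b i * c (i - k) - a i * d (i - k)))
            * (X:Polynomial (ZMod p)) ^ (k:ℕ))
        = ∑ k : Fin n, ∑ i : Fin n,
            (C (b i * c (i - k)) - C (a i * d (i - k))) * (X:Polynomial (ZMod p)) ^ (k:ℕ) := by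
          refine Finset.sum_congr rfl fun k _ => ?_
          rw [map_sum, Finset.sum_mul]
          exact Finset.sum_congr rfl fun i _ => by rw [map_sub]
      _ = ∑ i : Fin n, ∑ k : Fin n,
            (C (b i * c (i - k)) - C (a i * d (i - k))) * (X:Polynomial (ZMod p)) ^ (k:ℕ) :=
          Finset.sum_comm
      _ = ∑ i : Fin n, ∑ j : Fin n,
            (C (b i * c j) - C (a i * d j)) * (X:Polynomial (ZMod p)) ^ ((i - j : Fin n) : ℕ) := by
          refine Finset.sum_congr rfl fun i _ => ?_
          refine Fintype.sum_equiv (Equiv.subLeft i) _ _ fun k => ?_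
          simp [Equiv.subLeft, sub_sub_cancel]
  rw [expand, expand, gexp]
  have step :
      (∑ i : Fin n, ∑ j : Fin n, C (b i * c j) * (X:Polynomial (ZMod p)) ^ (i.val + j.val * (n-1))) -
        (∑ i : Fin n, ∑ j : Fin n, C (a i * d j) * (X:Polynomial (ZMod p)) ^ (i.val + j.val * (n-1))) -
        (∑ i : Fin n, ∑ j : Fin n,
          (C (b i * c j) - C (a i * d j)) * (X:Polynomial (ZMod p)) ^ ((i - j : Fin n) : ℕ)) =
      ∑ i : Fin n, ∑ j : Fin n, (C (b i * c j) - C (a i * d j)) *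
        ((X:Polynomial (ZMod p)) ^ (i.val + j.val * (n-1)) - X ^ ((i - j : Fin n) : ℕ)) := by
    rw [← Finset.sum_sub_distrib, ← Finset.sum_sub_distrib]
    refine Finset.sum_congr rfl fun i _ => ?_
    rw [← Finset.sum_sub_distrib, ← Finset.sum_sub_distrib]
    refine Finset.sum_congr rfl fun j _ => ?_
    ring
  rw [step]
  refine Finset.dvd_sum fun i _ => Finset.dvd_sum fun j _ => ?_
  exact (dvd_pow_sub_pow_of_mod p n _ _ (exp_congr i j)).mul_left _

theorem stmt_6 (p n : ℕ) (hp : p.Prime) [NeZero n] (hcop : Nat.Coprime n p)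
    (S : Submodule (ZMod p) ((Fin n → ZMod p) × (Fin n → ZMod p)))
    (hcyc : ∀ w ∈ S, (rightShift w.1, rightShift w.2) ∈ S) :
    (∀ u ∈ S, ∀ v ∈ S, sympForm u v = 0) ↔
      (∀ u ∈ S, ∀ v ∈ S,
        ((X : Polynomial (ZMod p)) ^ n - 1) ∣
          (vecToPoly u.2 * (vecToPoly v.1).comp (X ^ (n - 1)) -
            vecToPoly u.1 * (vecToPoly v.2).comp (X ^ (n - 1)))) := by
  haveI := Fact.mk hp
  have hmem : ∀ v ∈ S, ∀ k : ℕ,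
      ((rightShift^[k] v.1, rightShift^[k] v.2) :
        (Fin n → ZMod p) × (Fin n → ZMod p)) ∈ S := by
    intro v hv k
    induction k with
    | zero => simpa using hv
    | succ m ih =>
      rw [Function.iterate_succ_apply', Function.iterate_succ_apply']
      exact hcyc _ ih
  constructor
  · intro hiso u hu v hv
    have hg : (∑ k : Fin n, C (∑ i : Fin n,
        (u.2 i * v.1 (i - k) - u.1 i * v.2 (i - k))) * (X:Polynomial (ZMod p)) ^ (k:ℕ)) = 0 := by
      refine Finset.sum_eq_zero fun k _ => ?_
      have h0 := hiso u hu _ (hmem v hv (k:ℕ))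
      rw [sympForm] at h0
      simp only [rightShift_iter, Fin.cast_val_eq_self] at h0
      have hz : (∑ i : Fin n, (u.2 i * v.1 (i - k) - u.1 i * v.2 (i - k))) = 0 := by
        rw [Finset.sum_sub_distrib]
        linear_combination -h0
      rw [hz, map_zero, zero_mul]
    have hkey := key_dvd p n u.1 u.2 v.1 v.2
    rw [hg, sub_zero] at hkey
    exact hkey
  · intro hdvd u hu v hv
    have hgd : ((X:Polynomial (ZMod p))^n - 1) ∣
        ∑ k : Fin n, C (∑ i : Fin n,
          (u.2 i * v.1 (i - k) - u.1 i * v.2 (i - k))) * (X:Polynomial (ZMod p)) ^ (k:ℕ) := by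
      have := (hdvd u hu v hv).sub (key_dvd p n u.1 u.2 v.1 v.2)
      simpa using this
    have hg0 : (∑ k : Fin n, C (∑ i : Fin n,
        (u.2 i * v.1 (i - k) - u.1 i * v.2 (i - k))) * (X:Polynomial (ZMod p)) ^ (k:ℕ)) = 0 := by
      refine Polynomial.eq_zero_of_dvd_of_degree_lt hgd ?_
      have h1 : ((X:Polynomial (ZMod p))^n - 1).degree = n := by
        rw [show (1:Polynomial (ZMod p)) = C 1 by simp]
        exact degree_X_pow_sub_C (Nat.pos_of_ne_zero (NeZero.ne n)) 1
      rw [h1]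
      refine lt_of_le_of_lt (Polynomial.degree_sum_le _ _) ?_
      rw [Finset.sup_lt_iff (by exact_mod_cast WithBot.bot_lt_coe n)]
      intro k _
      refine lt_of_le_of_lt (Polynomial.degree_C_mul_X_pow_le _ _) ?_
      exact_mod_cast k.isLt
    have hcoef := congrArg (fun q => Polynomial.coeff q 0) hg0
    simp only [Polynomial.finset_sum_coeff, Polynomial.coeff_C_mul,
      Polynomial.coeff_X_pow, Polynomial.coeff_zero, mul_ite, mul_one, mul_zero] at hcoef
    have hredux : (∑ x : Fin n, if 0 = (x:ℕ) then
        (∑ i : Fin n, (u.2 i * v.1 (i - x) - u.1 i * v.2 (i - x))) else 0)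
        = ∑ i : Fin n, (u.2 i * v.1 i - u.1 i * v.2 i) := by
      rw [Finset.sum_eq_single (0 : Fin n)]
      · simp
      · intro x _ hx
        rw [if_neg]
        intro h
        exact hx (Fin.ext (by simp [← h]))
      · intro h
        exact absurd (Finset.mem_univ _) h
    rw [hredux, Finset.sum_sub_distrib] at hcoef
    rw [sympForm]
    linear_combination -hcoef
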